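/- Let (X, 𝓑, P) be a probability space, let T₁, T₂, T₃ : X → X be measure-preserving transformations, and let f₁, f₂, f₃ : X → ℂ be bounded measurable functions. Then for P-almost every x ∈ X and every integer N ≥ 1, |(1/N²) ∑_{n=1}^{N} ∑_{m=1}^{N} μ(n) μ(m) μ(n+m) f₁(T₁ⁿx) f₂(T₂^m x) f₃(T₃^{n+m} x)| ≤ √2 · ‖f₂‖_∞ · ‖f₃‖_∞ · sup_{t∈ℝ} |(1/N) ∑_{n=1}^{N} μ(n) f₁(T₁ⁿx) e^{−2πint}|. -/

import Mathlib

open Finset MeasureTheory Filter Topology ArithmeticFunction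


/-- Orthogonality of roots of unity: geometric sum. -/
lemma exp_sum_orth (Q : ℕ) (hQ : 0 < Q) (d : ℤ) (hd : |d| < Q) :
    ∑ j ∈ Finset.range Q, Complex.exp (2 * Real.pi * Complex.I * d * j / Q)
      = if d = 0 then (Q : ℂ) else 0 := by
  have hQ' : (Q : ℂ) ≠ 0 := Nat.cast_ne_zero.mpr hQ.ne'
  rcases eq_or_ne d 0 with h | h
  · simp [h]
  · rw [if_neg h]
    set r : ℂ := Complex.exp (2 * Real.pi * Complex.I * d / Q) with hr
    have hterm : ∀ j : ℕ, Complex.exp (2 * Real.pi * Complex.I * d * j / Q) = r ^ j := by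
      intro j
      rw [hr, ← Complex.exp_nat_mul]
      ring_nf
    have hr1 : r ≠ 1 := by
      intro h1
      rw [hr, Complex.exp_eq_one_iff] at h1
      obtain ⟨n, hn⟩ := h1
      have h2 : (d : ℂ) = n * Q := by
        have h2pi : (2 * (Real.pi : ℂ) * Complex.I) ≠ 0 := by
          simp [Real.pi_ne_zero, Complex.I_ne_zero, Complex.ofReal_ne_zero]
        field_simp at hn
        have : (d : ℂ) * (2 * (Real.pi:ℂ) * Complex.I) = n * Q * (2 * (Real.pi:ℂ) * Complex.I) := by
          linear_combination (2 * (Real.pi:ℂ) * Complex.I) * hn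
        exact mul_right_cancel₀ h2pi this
      have h3 : d = n * Q := by exact_mod_cast h2
      rcases eq_or_ne n 0 with h4 | h4
      · exact h (by simp [h3, h4])
      · have h5 : 1 ≤ |n| := Int.one_le_abs h4
        have : (Q : ℤ) ≤ |d| := by
          rw [h3, abs_mul]
          nlinarith [abs_nonneg n, le_abs_self (Q:ℤ), abs_nonneg (Q:ℤ)]
        omega
    have hrQ : r ^ Q = 1 := by
      rw [hr, ← Complex.exp_nat_mul]
      have harg : (Q : ℂ) * (2 * Real.pi * Complex.I * d / Q) = d * (2 * Real.pi * Complex.I) := by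
        field_simp
      rw [harg, Complex.exp_int_mul_two_pi_mul_I]
    simp_rw [hterm]
    rw [geom_sum_eq hr1, hrQ]
    simp

lemma orth_pair (Q : ℕ) (hQ : 0 < Q) (k k' : ℕ) (hk : k < Q) (hk' : k' < Q) :
    ∑ j ∈ Finset.range Q,
      Complex.exp (-(2 * Real.pi * Complex.I * k * j / Q)) *
        Complex.exp (2 * Real.pi * Complex.I * k' * j / Q)
      = if k = k' then (Q : ℂ) else 0 := by
  have hcomb : ∀ j : ℕ,
      Complex.exp (-(2 * Real.pi * Complex.I * k * j / Q)) *
        Complex.exp (2 * Real.pi * Complex.I * k' * j / Q)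
      = Complex.exp (2 * Real.pi * Complex.I * (((k' : ℤ) - k : ℤ) : ℂ) * j / Q) := by
    intro j
    rw [← Complex.exp_add]
    congr 1
    push_cast
    ring
  simp_rw [hcomb]
  rw [exp_sum_orth Q hQ ((k' : ℤ) - k) (by rw [abs_lt]; omega)]
  by_cases h : k = k'
  · simp [h]
  · rw [if_neg (by omega), if_neg h]

lemma parseval (Q : ℕ) (hQ : 0 < Q) (S : Finset ℕ) (hS : ∀ k ∈ S, k < Q) (c : ℕ → ℂ) :
    ∑ j ∈ Finset.range Q,
        ‖(∑ k ∈ S, c k *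
          Complex.exp (-(2 * Real.pi * Complex.I * k * j / Q)))‖ ^ 2
      = Q * ∑ k ∈ S, ‖(c k)‖ ^ 2 := by
  have habs : ∀ z : ℂ, ((‖z‖ : ℝ) : ℂ) ^ 2 = z * (starRingEnd ℂ) z := by
    intro z
    rw [← Complex.ofReal_pow, ← Complex.normSq_eq_norm_sq, Complex.mul_conj]
  have hconj : ∀ (k j : ℕ),
      (starRingEnd ℂ) (Complex.exp (-(2 * Real.pi * Complex.I * k * j / Q)))
        = Complex.exp (2 * Real.pi * Complex.I * k * j / Q) := by
    intro k j
    rw [← Complex.exp_conj]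
    congr 1
    simp [map_neg, map_div₀, map_mul, map_ofNat, Complex.conj_I, Complex.conj_ofReal]
    ring
  apply Complex.ofReal_injective
  push_cast
  simp_rw [habs, map_sum, map_mul, hconj, Finset.sum_mul_sum]
  rw [Finset.sum_comm, Finset.mul_sum]
  refine Finset.sum_congr rfl fun k hk => ?_
  rw [Finset.sum_comm]
  have step1 : ∀ k' ∈ S,
      ∑ j ∈ Finset.range Q,
        (c k * Complex.exp (-(2 * Real.pi * Complex.I * k * j / Q))) *
          ((starRingEnd ℂ) (c k') * Complex.exp (2 * Real.pi * Complex.I * k' * j / Q))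
      = if k = k' then (c k * (starRingEnd ℂ) (c k')) * Q else 0 := by
    intro k' hk'
    have hre : ∀ j ∈ Finset.range Q,
        (c k * Complex.exp (-(2 * Real.pi * Complex.I * k * j / Q))) *
          ((starRingEnd ℂ) (c k') * Complex.exp (2 * Real.pi * Complex.I * k' * j / Q))
        = (c k * (starRingEnd ℂ) (c k')) *
            (Complex.exp (-(2 * Real.pi * Complex.I * k * j / Q)) *
              Complex.exp (2 * Real.pi * Complex.I * k' * j / Q)) := fun j _ => by ring
    rw [Finset.sum_congr rfl hre, ← Finset.mul_sum]
    rw [orth_pair Q hQ k k' (hS k hk) (hS k' hk')]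
    by_cases h : k = k' <;> simp [h]
  rw [Finset.sum_congr rfl step1, Finset.sum_ite_eq S k fun k' => (c k * (starRingEnd ℂ) (c k')) * Q]
  rw [if_pos hk]
  ring

lemma triple_sum (N : ℕ) (hN : 1 ≤ N) (A B C : ℕ → ℂ) :
    ∑ n ∈ Finset.Icc 1 N, ∑ m ∈ Finset.Icc 1 N, A n * B m * C (n + m)
      = (1 / ((2 * N + 1 : ℕ) : ℂ)) * ∑ j ∈ Finset.range (2 * N + 1),
          ((∑ n ∈ Finset.Icc 1 N,
              A n * Complex.exp (2 * Real.pi * Complex.I * n * j / ((2 * N + 1 : ℕ) : ℂ))) *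
            (∑ m ∈ Finset.Icc 1 N,
              B m * Complex.exp (2 * Real.pi * Complex.I * m * j / ((2 * N + 1 : ℕ) : ℂ))) *
            (∑ k ∈ Finset.Icc 2 (2 * N),
              C k * Complex.exp (-(2 * Real.pi * Complex.I * k * j / ((2 * N + 1 : ℕ) : ℂ))))) := by
  have hQ : 0 < 2 * N + 1 := by omega
  have hQ' : ((2 * N + 1 : ℕ) : ℂ) ≠ 0 := Nat.cast_ne_zero.mpr hQ.ne'
  rw [eq_comm]
  have expand : ∀ j ∈ Finset.range (2 * N + 1),
      ((∑ n ∈ Finset.Icc 1 N,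
          A n * Complex.exp (2 * Real.pi * Complex.I * n * j / ((2 * N + 1 : ℕ) : ℂ))) *
        (∑ m ∈ Finset.Icc 1 N,
          B m * Complex.exp (2 * Real.pi * Complex.I * m * j / ((2 * N + 1 : ℕ) : ℂ))) *
        (∑ k ∈ Finset.Icc 2 (2 * N),
          C k * Complex.exp (-(2 * Real.pi * Complex.I * k * j / ((2 * N + 1 : ℕ) : ℂ)))))
      = ∑ k ∈ Finset.Icc 2 (2 * N), ∑ m ∈ Finset.Icc 1 N, ∑ n ∈ Finset.Icc 1 N,
          (A n * B m * C k) *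
            Complex.exp (2 * Real.pi * Complex.I * ((((n : ℤ) + m - k : ℤ)) : ℂ) * j
              / ((2 * N + 1 : ℕ) : ℂ)) := by
    intro j _
    simp only [Finset.sum_mul, Finset.mul_sum]
    refine Finset.sum_congr rfl fun k hk => Finset.sum_congr rfl fun m hm =>
      Finset.sum_congr rfl fun n hn => ?_
    have hE : Complex.exp (2 * Real.pi * Complex.I * n * j / ((2 * N + 1 : ℕ) : ℂ)) *
        Complex.exp (2 * Real.pi * Complex.I * m * j / ((2 * N + 1 : ℕ) : ℂ)) *
        Complex.exp (-(2 * Real.pi * Complex.I * k * j / ((2 * N + 1 : ℕ) : ℂ)))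
        = Complex.exp (2 * Real.pi * Complex.I * ((((n : ℤ) + m - k : ℤ)) : ℂ) * j
            / ((2 * N + 1 : ℕ) : ℂ)) := by
      rw [← Complex.exp_add, ← Complex.exp_add]
      congr 1
      push_cast
      ring
    calc A n * Complex.exp (2 * Real.pi * Complex.I * n * j / ((2 * N + 1 : ℕ) : ℂ)) *
          (B m * Complex.exp (2 * Real.pi * Complex.I * m * j / ((2 * N + 1 : ℕ) : ℂ))) *
          (C k * Complex.exp (-(2 * Real.pi * Complex.I * k * j / ((2 * N + 1 : ℕ) : ℂ))))
        = (A n * B m * C k) *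
            (Complex.exp (2 * Real.pi * Complex.I * n * j / ((2 * N + 1 : ℕ) : ℂ)) *
              Complex.exp (2 * Real.pi * Complex.I * m * j / ((2 * N + 1 : ℕ) : ℂ)) *
              Complex.exp (-(2 * Real.pi * Complex.I * k * j / ((2 * N + 1 : ℕ) : ℂ)))) := by
          ring
      _ = _ := by rw [hE]
  rw [Finset.sum_congr rfl expand]
  have horth : ∀ k ∈ Finset.Icc 2 (2 * N), ∀ m ∈ Finset.Icc 1 N, ∀ n ∈ Finset.Icc 1 N,
      ∑ j ∈ Finset.range (2 * N + 1),
        (A n * B m * C k) *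
          Complex.exp (2 * Real.pi * Complex.I * ((((n : ℤ) + m - k : ℤ)) : ℂ) * j
            / ((2 * N + 1 : ℕ) : ℂ))
      = if n + m = k then (A n * B m * C k) * ((2 * N + 1 : ℕ) : ℂ) else 0 := by
    intro k hk m hm n hn
    rw [← Finset.mul_sum,
      exp_sum_orth (2 * N + 1) hQ ((n : ℤ) + m - k) (by
        simp only [Finset.mem_Icc] at hn hm hk
        rw [abs_lt]; omega)]
    have hiff : ((n : ℤ) + m - k = 0) ↔ (n + m = k) := by omega
    by_cases h : n + m = k
    · rw [if_pos (hiff.mpr h), if_pos h]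
    · rw [if_neg (fun hh => h (hiff.mp hh)), if_neg h, mul_zero]
  have swap : ∑ j ∈ Finset.range (2 * N + 1),
        ∑ k ∈ Finset.Icc 2 (2 * N), ∑ m ∈ Finset.Icc 1 N, ∑ n ∈ Finset.Icc 1 N,
          (A n * B m * C k) *
            Complex.exp (2 * Real.pi * Complex.I * ((((n : ℤ) + m - k : ℤ)) : ℂ) * j
              / ((2 * N + 1 : ℕ) : ℂ))
      = ∑ m ∈ Finset.Icc 1 N, ∑ n ∈ Finset.Icc 1 N,
          (A n * B m * C (n + m)) * ((2 * N + 1 : ℕ) : ℂ) := by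
    rw [Finset.sum_comm]
    rw [Finset.sum_congr rfl fun k (hk : k ∈ Finset.Icc 2 (2 * N)) => Finset.sum_comm]
    rw [Finset.sum_congr rfl fun k (hk : k ∈ Finset.Icc 2 (2 * N)) =>
      Finset.sum_congr rfl fun m (hm : m ∈ Finset.Icc 1 N) => Finset.sum_comm]
    rw [Finset.sum_congr rfl fun k hk => Finset.sum_congr rfl fun m hm =>
      Finset.sum_congr rfl fun n hn => horth k hk m hm n hn]
    rw [Finset.sum_comm]
    refine Finset.sum_congr rfl fun m hm => ?_
    rw [Finset.sum_comm]
    refine Finset.sum_congr rfl fun n hn => ?_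
    · rw [Finset.sum_ite_eq (Finset.Icc 2 (2 * N)) (n + m)
        (fun k => (A n * B m * C k) * ((2 * N + 1 : ℕ) : ℂ))]
      simp only [Finset.mem_Icc] at hn hm
      rw [if_pos (Finset.mem_Icc.mpr (by omega))]
  rw [swap]
  rw [Finset.sum_comm]
  simp_rw [← Finset.sum_mul]
  rw [one_div, inv_mul_eq_div, mul_div_assoc, div_self hQ', mul_one]

lemma mu_abs_le_one (n : ℕ) :
    ‖((ArithmeticFunction.moebius n : ℤ) : ℂ)‖ ≤ 1 := by
  rcases ArithmeticFunction.moebius_eq_or n with h | h | h <;> simp [h]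

lemma key_bound (N : ℕ) (hN : 1 ≤ N) (a b c : ℕ → ℂ) (B₂ B₃ M : ℝ)
    (hB₂ : 0 ≤ B₂) (hB₃ : 0 ≤ B₃) (hM : 0 ≤ M)
    (hb : ∀ m ∈ Finset.Icc 1 N, ‖(b m)‖ ≤ B₂)
    (hc : ∀ k ∈ Finset.Icc 2 (2 * N), ‖(c k)‖ ≤ B₃)
    (hsup : ∀ t : ℝ, ‖((1 / (N : ℂ)) * ∑ n ∈ Finset.Icc 1 N,
        (ArithmeticFunction.moebius n : ℂ) * a n *
          Complex.exp (-(2 * Real.pi * Complex.I * n * t)))‖ ≤ M) :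
    ‖((1 / (N : ℂ) ^ 2) *
        ∑ n ∈ Finset.Icc 1 N, ∑ m ∈ Finset.Icc 1 N,
          (ArithmeticFunction.moebius n : ℂ) * (ArithmeticFunction.moebius m : ℂ) *
            (ArithmeticFunction.moebius (n + m) : ℂ) * a n * b m * c (n + m))‖
      ≤ Real.sqrt 2 * B₂ * B₃ * M := by
  have hN0 : (0:ℝ) < (N:ℝ) := by exact_mod_cast hN
  have hNc : ((N:ℕ) : ℂ) ≠ 0 := Nat.cast_ne_zero.mpr (by omega)
  set Q : ℕ := 2 * N + 1 with hQdef
  have hQpos : 0 < Q := by omega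
  have hQ0 : (0:ℝ) < (Q:ℝ) := by exact_mod_cast hQpos
  -- abbreviations
  set A : ℕ → ℂ := fun n => (ArithmeticFunction.moebius n : ℂ) * a n with hA
  set Bf : ℕ → ℂ := fun m => (ArithmeticFunction.moebius m : ℂ) * b m with hB
  set Cf : ℕ → ℂ := fun k => (ArithmeticFunction.moebius k : ℂ) * c k with hC
  have hrw : ∑ n ∈ Finset.Icc 1 N, ∑ m ∈ Finset.Icc 1 N,
      (ArithmeticFunction.moebius n : ℂ) * (ArithmeticFunction.moebius m : ℂ) *
        (ArithmeticFunction.moebius (n + m) : ℂ) * a n * b m * c (n + m)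
      = ∑ n ∈ Finset.Icc 1 N, ∑ m ∈ Finset.Icc 1 N, A n * Bf m * Cf (n + m) := by
    refine Finset.sum_congr rfl fun n _ => Finset.sum_congr rfl fun m _ => ?_
    simp only [hA, hB, hC]
    ring
  rw [hrw, triple_sum N hN A Bf Cf, ← hQdef]
  -- notation for the three trigonometric sums
  set X : ℕ → ℂ := fun j => ∑ n ∈ Finset.Icc 1 N,
      A n * Complex.exp (2 * Real.pi * Complex.I * n * j / (Q : ℂ)) with hX
  set Y : ℕ → ℂ := fun j => ∑ m ∈ Finset.Icc 1 N,
      Bf m * Complex.exp (2 * Real.pi * Complex.I * m * j / (Q : ℂ)) with hY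
  set Z : ℕ → ℂ := fun j => ∑ k ∈ Finset.Icc 2 (2 * N),
      Cf k * Complex.exp (-(2 * Real.pi * Complex.I * k * j / (Q : ℂ))) with hZ
  -- Bound on |X j| coming from the sup hypothesis
  have hXb : ∀ j : ℕ, ‖(X j)‖ ≤ (N : ℝ) * M := by
    intro j
    have h1 : X j = (N : ℂ) * ((1 / (N : ℂ)) * ∑ n ∈ Finset.Icc 1 N,
        (ArithmeticFunction.moebius n : ℂ) * a n *
          Complex.exp (-(2 * Real.pi * Complex.I * n * ((-(j / Q : ℝ) : ℝ) : ℂ)))) := by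
      rw [← mul_assoc, mul_one_div, div_self hNc, one_mul, hX]
      refine Finset.sum_congr rfl fun n _ => ?_
      have harg : (2 * Real.pi * Complex.I * (n : ℂ) * (j : ℂ) / ((Q : ℕ) : ℂ))
          = -(2 * Real.pi * Complex.I * (n : ℂ) * ((-(j / Q : ℝ) : ℝ) : ℂ)) := by
        push_cast
        ring
      rw [hA]
      simp only []
      rw [harg]
    rw [h1, norm_mul, Complex.norm_natCast]
    exact mul_le_mul_of_nonneg_left (hsup (-(j / Q : ℝ))) (by positivity)
  -- conjugation representation of Y, to feed Parseval
  have hconjexp : ∀ (k j : ℕ),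
      (starRingEnd ℂ) (Complex.exp (2 * Real.pi * Complex.I * k * j / (Q : ℂ)))
        = Complex.exp (-(2 * Real.pi * Complex.I * k * j / (Q : ℂ))) := by
    intro k j
    rw [← Complex.exp_conj]
    congr 1
    simp [map_neg, map_div₀, map_mul, map_ofNat, Complex.conj_I, Complex.conj_ofReal]
    ring
  have hYabs : ∀ j : ℕ, ‖(Y j)‖
      = ‖(∑ m ∈ Finset.Icc 1 N, (starRingEnd ℂ) (Bf m) *
          Complex.exp (-(2 * Real.pi * Complex.I * m * j / (Q : ℂ))))‖ := by
    intro j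
    rw [← Complex.norm_conj (Y j), hY]
    simp only [map_sum, map_mul, hconjexp]
  -- Parseval bounds
  have hparsY : ∑ j ∈ Finset.range Q, ‖(Y j)‖ ^ 2
      ≤ (Q : ℝ) * ((N : ℝ) * B₂ ^ 2) := by
    have hsets : ∀ m ∈ Finset.Icc 1 N, m < Q := by
      intro m hm; simp only [Finset.mem_Icc] at hm; omega
    calc ∑ j ∈ Finset.range Q, ‖(Y j)‖ ^ 2
        = ∑ j ∈ Finset.range Q, ‖(∑ m ∈ Finset.Icc 1 N,
            (starRingEnd ℂ) (Bf m) *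
              Complex.exp (-(2 * Real.pi * Complex.I * m * j / (Q : ℂ))))‖ ^ 2 := by
          refine Finset.sum_congr rfl fun j _ => ?_
          rw [hYabs j]
      _ = (Q : ℝ) * ∑ m ∈ Finset.Icc 1 N, ‖((starRingEnd ℂ) (Bf m))‖ ^ 2 :=
          parseval Q hQpos (Finset.Icc 1 N) hsets _
      _ ≤ (Q : ℝ) * ((N : ℝ) * B₂ ^ 2) := by
          refine mul_le_mul_of_nonneg_left ?_ (le_of_lt hQ0)
          calc ∑ m ∈ Finset.Icc 1 N, ‖((starRingEnd ℂ) (Bf m))‖ ^ 2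
              ≤ ∑ m ∈ Finset.Icc 1 N, B₂ ^ 2 := by
                refine Finset.sum_le_sum fun m hm => ?_
                rw [Complex.norm_conj]
                refine pow_le_pow_left₀ (norm_nonneg _) ?_ 2
                calc ‖(Bf m)‖ ≤ 1 * ‖(b m)‖ := by
                      rw [hB]; simp only []
                      rw [norm_mul]
                      exact mul_le_mul_of_nonneg_right (mu_abs_le_one m)
                        (norm_nonneg _)
                  _ ≤ B₂ := by rw [one_mul]; exact hb m hm
            _ = (N : ℝ) * B₂ ^ 2 := by
                rw [Finset.sum_const, Nat.card_Icc]
                simp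
  have hparsZ : ∑ j ∈ Finset.range Q, ‖(Z j)‖ ^ 2
      ≤ (Q : ℝ) * ((2 * (N : ℝ)) * B₃ ^ 2) := by
    have hsets : ∀ k ∈ Finset.Icc 2 (2 * N), k < Q := by
      intro k hk; simp only [Finset.mem_Icc] at hk; omega
    calc ∑ j ∈ Finset.range Q, ‖(Z j)‖ ^ 2
        = (Q : ℝ) * ∑ k ∈ Finset.Icc 2 (2 * N), ‖(Cf k)‖ ^ 2 :=
          parseval Q hQpos (Finset.Icc 2 (2 * N)) hsets _
      _ ≤ (Q : ℝ) * ((2 * (N : ℝ)) * B₃ ^ 2) := by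
          refine mul_le_mul_of_nonneg_left ?_ (le_of_lt hQ0)
          calc ∑ k ∈ Finset.Icc 2 (2 * N), ‖(Cf k)‖ ^ 2
              ≤ ∑ k ∈ Finset.Icc 2 (2 * N), B₃ ^ 2 := by
                refine Finset.sum_le_sum fun k hk => ?_
                refine pow_le_pow_left₀ (norm_nonneg _) ?_ 2
                calc ‖(Cf k)‖ ≤ 1 * ‖(c k)‖ := by
                      rw [hC]; simp only []
                      rw [norm_mul]
                      exact mul_le_mul_of_nonneg_right (mu_abs_le_one k)
                        (norm_nonneg _)
                  _ ≤ B₃ := by rw [one_mul]; exact hc k hk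
            _ ≤ (2 * (N : ℝ)) * B₃ ^ 2 := by
                rw [Finset.sum_const, Nat.card_Icc, nsmul_eq_mul]
                have hcard : ((2 * N + 1 - 2 : ℕ) : ℝ) ≤ 2 * (N : ℝ) := by
                  have h : (2 * N + 1 - 2 : ℕ) ≤ 2 * N := by omega
                  calc ((2 * N + 1 - 2 : ℕ) : ℝ) ≤ ((2 * N : ℕ) : ℝ) := Nat.cast_le.mpr h
                    _ = 2 * (N : ℝ) := by push_cast; ring
                exact mul_le_mul_of_nonneg_right hcard (by positivity)
  -- Cauchy–Schwarz
  have hCS : ∑ j ∈ Finset.range Q, ‖(Y j)‖ * ‖(Z j)‖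
      ≤ Real.sqrt 2 * (Q : ℝ) * (N : ℝ) * B₂ * B₃ := by
    have h1 : (∑ j ∈ Finset.range Q, ‖(Y j)‖ * ‖(Z j)‖) ^ 2
        ≤ (∑ j ∈ Finset.range Q, ‖(Y j)‖ ^ 2) *
          (∑ j ∈ Finset.range Q, ‖(Z j)‖ ^ 2) :=
      Finset.sum_mul_sq_le_sq_mul_sq _ _ _
    have h2 : (∑ j ∈ Finset.range Q, ‖(Y j)‖ ^ 2) *
          (∑ j ∈ Finset.range Q, ‖(Z j)‖ ^ 2)
        ≤ (Real.sqrt 2 * (Q : ℝ) * (N : ℝ) * B₂ * B₃) ^ 2 := by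
      have h3 : ((Q : ℝ) * ((N : ℝ) * B₂ ^ 2)) * ((Q : ℝ) * ((2 * (N : ℝ)) * B₃ ^ 2))
          ≤ (Real.sqrt 2 * (Q : ℝ) * (N : ℝ) * B₂ * B₃) ^ 2 := by
        have hs2 : Real.sqrt 2 ^ 2 = 2 := Real.sq_sqrt (by norm_num)
        nlinarith [sq_nonneg B₂, sq_nonneg B₃, hQ0, hN0]
      refine le_trans ?_ h3
      have hYnn : (0:ℝ) ≤ ∑ j ∈ Finset.range Q, ‖(Y j)‖ ^ 2 :=
        Finset.sum_nonneg fun j _ => sq_nonneg _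
      have hZnn : (0:ℝ) ≤ ∑ j ∈ Finset.range Q, ‖(Z j)‖ ^ 2 :=
        Finset.sum_nonneg fun j _ => sq_nonneg _
      exact mul_le_mul hparsY hparsZ hZnn (by positivity)
    have hsumnn : (0:ℝ) ≤ ∑ j ∈ Finset.range Q, ‖(Y j)‖ * ‖(Z j)‖ :=
      Finset.sum_nonneg fun j _ => mul_nonneg (norm_nonneg _) (norm_nonneg _)
    have hrhsnn : (0:ℝ) ≤ Real.sqrt 2 * (Q : ℝ) * (N : ℝ) * B₂ * B₃ := by positivity
    nlinarith [le_trans h1 h2]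
  -- assemble
  rw [norm_mul, norm_mul]
  have habs1 : ‖(1 / (N : ℂ) ^ 2)‖ = 1 / (N : ℝ) ^ 2 := by
    rw [norm_div, norm_one, norm_pow, Complex.norm_natCast]
  have habsQ : ‖(1 / ((Q : ℕ) : ℂ))‖ = 1 / (Q : ℝ) := by
    rw [norm_div, norm_one, Complex.norm_natCast]
  rw [habs1, habsQ]
  have hT : ‖(∑ j ∈ Finset.range Q, X j * Y j * Z j)‖
      ≤ ((N : ℝ) * M) * (Real.sqrt 2 * (Q : ℝ) * (N : ℝ) * B₂ * B₃) := by
    calc ‖(∑ j ∈ Finset.range Q, X j * Y j * Z j)‖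
        ≤ ∑ j ∈ Finset.range Q, ‖(X j * Y j * Z j)‖ :=
          norm_sum_le _ _
      _ = ∑ j ∈ Finset.range Q, ‖(X j)‖ * ‖(Y j)‖ * ‖(Z j)‖ := by
          refine Finset.sum_congr rfl fun j _ => ?_
          rw [norm_mul, norm_mul]
      _ ≤ ∑ j ∈ Finset.range Q, ((N : ℝ) * M) * (‖(Y j)‖ * ‖(Z j)‖) := by
          refine Finset.sum_le_sum fun j _ => ?_
          rw [← mul_assoc]
          exact mul_le_mul_of_nonneg_right
            (mul_le_mul_of_nonneg_right (hXb j) (norm_nonneg _))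
            (norm_nonneg _)
      _ = ((N : ℝ) * M) * ∑ j ∈ Finset.range Q, ‖(Y j)‖ * ‖(Z j)‖ := by
          rw [Finset.mul_sum]
      _ ≤ ((N : ℝ) * M) * (Real.sqrt 2 * (Q : ℝ) * (N : ℝ) * B₂ * B₃) :=
          mul_le_mul_of_nonneg_left hCS (by positivity)
  calc (1 / (N : ℝ) ^ 2) * ((1 / (Q : ℝ)) * ‖(∑ j ∈ Finset.range Q, X j * Y j * Z j)‖)
      ≤ (1 / (N : ℝ) ^ 2) * ((1 / (Q : ℝ)) *
          (((N : ℝ) * M) * (Real.sqrt 2 * (Q : ℝ) * (N : ℝ) * B₂ * B₃))) := by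
        refine mul_le_mul_of_nonneg_left (mul_le_mul_of_nonneg_left hT (by positivity))
          (by positivity)
    _ = Real.sqrt 2 * B₂ * B₃ * M := by
        field_simp

/-- The cubic average of order 2 with Möbius weight is bounded by
`√2 · ‖f₂‖_∞ · ‖f₃‖_∞ · sup_t |(1/N) ∑_{n=1}^{N} μ(n) f₁(T₁ⁿx) e^{−2πint}|`. -/
theorem cubic_average_moebius_sup_bound
    {X : Type*} [MeasurableSpace X]
    (P : Measure X) [IsProbabilityMeasure P]
    (T₁ T₂ T₃ : X → X)
    (hT₁ : MeasurePreserving T₁ P P) (hT₂ : MeasurePreserving T₂ P P)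
    (hT₃ : MeasurePreserving T₃ P P)
    (f₁ f₂ f₃ : X → ℂ)
    (hf₁ : Measurable f₁) (hf₂ : Measurable f₂) (hf₃ : Measurable f₃)
    (hb₁ : ∃ C, ∀ x, ‖(f₁ x)‖ ≤ C)
    (hb₂ : ∃ C, ∀ x, ‖(f₂ x)‖ ≤ C)
    (hb₃ : ∃ C, ∀ x, ‖(f₃ x)‖ ≤ C) :
    ∀ᵐ x ∂P, ∀ N : ℕ, 1 ≤ N →
      ‖((1 / (N : ℂ) ^ 2) *
          ∑ n ∈ Finset.Icc 1 N, ∑ m ∈ Finset.Icc 1 N,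
            (ArithmeticFunction.moebius n : ℂ) * (ArithmeticFunction.moebius m : ℂ) *
              (ArithmeticFunction.moebius (n + m) : ℂ) *
              f₁ (T₁^[n] x) * f₂ (T₂^[m] x) * f₃ (T₃^[n + m] x))‖
        ≤ Real.sqrt 2 * (eLpNorm f₂ ⊤ P).toReal * (eLpNorm f₃ ⊤ P).toReal *
            ⨆ t : ℝ, ‖((1 / (N : ℂ)) * ∑ n ∈ Finset.Icc 1 N,
              (ArithmeticFunction.moebius n : ℂ) * f₁ (T₁^[n] x) *
                Complex.exp (-(2 * Real.pi * Complex.I * n * t)))‖ := by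
  obtain ⟨C₁, hC₁⟩ := hb₁
  obtain ⟨C₂, hC₂⟩ := hb₂
  obtain ⟨C₃, hC₃⟩ := hb₃
  have hC₁' : ∀ x, ‖(f₁ x)‖ ≤ max C₁ 0 := fun x => le_trans (hC₁ x) (le_max_left _ _)
  set B₂ : ℝ := (eLpNorm f₂ ⊤ P).toReal with hB₂def
  set B₃ : ℝ := (eLpNorm f₃ ⊤ P).toReal with hB₃def
  -- a.e. bounds by the essential sup norm
  have hae : ∀ (f : X → ℂ) (C : ℝ), (∀ x, ‖(f x)‖ ≤ C) →
      ∀ᵐ x ∂P, ‖(f x)‖ ≤ (eLpNorm f ⊤ P).toReal := by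
    intro f C hC
    have hfin : eLpNormEssSup f P ≠ ⊤ := by
      refine ne_of_lt (eLpNormEssSup_lt_top_of_ae_bound (C := C) (ae_of_all _ fun x => ?_))
      exact hC x
    filter_upwards [enorm_ae_le_eLpNormEssSup f P] with x hx
    rw [eLpNorm_exponent_top]
    simpa using ENNReal.toReal_mono hfin hx
  have hae₂ : ∀ᵐ x ∂P, ∀ m : ℕ, ‖(f₂ (T₂^[m] x))‖ ≤ B₂ := by
    rw [MeasureTheory.ae_all_iff]
    intro m
    exact ((hT₂.iterate m).quasiMeasurePreserving).ae (hae f₂ C₂ hC₂)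
  have hae₃ : ∀ᵐ x ∂P, ∀ k : ℕ, ‖(f₃ (T₃^[k] x))‖ ≤ B₃ := by
    rw [MeasureTheory.ae_all_iff]
    intro k
    exact ((hT₃.iterate k).quasiMeasurePreserving).ae (hae f₃ C₃ hC₃)
  filter_upwards [hae₂, hae₃] with x hx₂ hx₃ N hN
  have hN0 : (0:ℝ) < (N:ℝ) := by exact_mod_cast hN
  have hNc : ((N:ℕ) : ℂ) ≠ 0 := Nat.cast_ne_zero.mpr (by omega)
  set g : ℝ → ℝ := fun t => ‖((1 / (N : ℂ)) * ∑ n ∈ Finset.Icc 1 N,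
      (ArithmeticFunction.moebius n : ℂ) * f₁ (T₁^[n] x) *
        Complex.exp (-(2 * Real.pi * Complex.I * n * t)))‖ with hg
  have hgbd : ∀ t : ℝ, g t ≤ max C₁ 0 := by
    intro t
    rw [hg]
    simp only []
    rw [norm_mul]
    have h1 : ‖(1 / (N : ℂ))‖ = 1 / (N : ℝ) := by
      rw [norm_div, norm_one, Complex.norm_natCast]
    rw [h1]
    have h2 : ‖(∑ n ∈ Finset.Icc 1 N,
        (ArithmeticFunction.moebius n : ℂ) * f₁ (T₁^[n] x) *
          Complex.exp (-(2 * Real.pi * Complex.I * n * t)))‖ ≤ (N : ℝ) * max C₁ 0 := by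
      calc ‖(∑ n ∈ Finset.Icc 1 N,
            (ArithmeticFunction.moebius n : ℂ) * f₁ (T₁^[n] x) *
              Complex.exp (-(2 * Real.pi * Complex.I * n * t)))‖
          ≤ ∑ n ∈ Finset.Icc 1 N, ‖((ArithmeticFunction.moebius n : ℂ) *
              f₁ (T₁^[n] x) * Complex.exp (-(2 * Real.pi * Complex.I * n * t)))‖ :=
            norm_sum_le _ _
        _ ≤ ∑ n ∈ Finset.Icc 1 N, max C₁ 0 := by
            refine Finset.sum_le_sum fun n _ => ?_
            rw [norm_mul, norm_mul]
            have he : ‖(Complex.exp (-(2 * Real.pi * Complex.I * n * t)))‖ = 1 := by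
              have : -(2 * Real.pi * Complex.I * (n : ℂ) * (t : ℂ))
                  = ((-(2 * Real.pi * n * t) : ℝ) : ℂ) * Complex.I := by
                push_cast; ring
              rw [this, Complex.norm_exp_ofReal_mul_I]
            rw [he, mul_one]
            calc ‖((ArithmeticFunction.moebius n : ℂ))‖ *
                  ‖(f₁ (T₁^[n] x))‖
                ≤ 1 * max C₁ 0 := by
                  exact mul_le_mul (mu_abs_le_one n) (hC₁' _) (norm_nonneg _)
                    zero_le_one
              _ = max C₁ 0 := one_mul _
        _ = (N : ℝ) * max C₁ 0 := by
            rw [Finset.sum_const, Nat.card_Icc, nsmul_eq_mul]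
            simp
    calc (1 / (N : ℝ)) * ‖(∑ n ∈ Finset.Icc 1 N,
          (ArithmeticFunction.moebius n : ℂ) * f₁ (T₁^[n] x) *
            Complex.exp (-(2 * Real.pi * Complex.I * n * t)))‖
        ≤ (1 / (N : ℝ)) * ((N : ℝ) * max C₁ 0) :=
          mul_le_mul_of_nonneg_left h2 (by positivity)
      _ = max C₁ 0 := by field_simp
  have hbdd : BddAbove (Set.range g) := by
    refine ⟨max C₁ 0, ?_⟩
    rintro y ⟨t, rfl⟩
    exact hgbd t
  have hsup : ∀ t : ℝ, g t ≤ ⨆ t : ℝ, g t := fun t => le_ciSup hbdd t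
  have hM0 : 0 ≤ ⨆ t : ℝ, g t := le_trans (norm_nonneg _) (hsup 0)
  have := key_bound N hN (fun n => f₁ (T₁^[n] x)) (fun m => f₂ (T₂^[m] x))
    (fun k => f₃ (T₃^[k] x)) B₂ B₃ (⨆ t : ℝ, g t)
    ENNReal.toReal_nonneg ENNReal.toReal_nonneg hM0
    (fun m _ => hx₂ m) (fun k _ => hx₃ k) hsup
  exact this
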